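/- In the setting of the previous lemma (the cone C ⊆ ℝ_{≥0}^k × ℝ^n containing e_1,…,e_k with π_n(C) = ℝ^n; points x_1,…,x_m ∈ C; index sets J_1,…,J_p of cardinality n; subcones C_i = conic hull({e_1,…,e_k} ∪ {x_j : j ∈ J_i}) and D_i = conic hull({π_n(x_j) : j ∈ J_i}); hypotheses C = ∪_i C_i and {D_i} a sector decomposition of ℝ^n by full sectors), assume in addition: whenever D_i ∩ D_ℓ is a wall in ℝ^n, the index set intersection J_i ∩ J_ℓ has exactly n−1 elements and D_i ∩ D_ℓ = conic hull({π_n(x_j) : j ∈ J_i ∩ J_ℓ}). Then for all distinct i, ℓ: the intersection C_i ∩ C_ℓ is a wall in ℝ^k × ℝ^n (a cone of dimension k+n−1) if and only if D_i ∩ D_ℓ is a wall in ℝ^n; and in that case C_i ∩ C_ℓ = conic hull({e_1,…,e_k} ∪ {x_j : j ∈ J_i ∩ J_ℓ}). Consequently W ↦ π_n(W) is a one-to-one correspondence between the walls of {C_i} in C and the walls of {D_i} in ℝ^n. -/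

import Mathlib

noncomputable section

/-- The conic hull of a set `S`: all finite nonnegative real linear combinations
of elements of `S`. -/
def coneHull {V : Type*} [AddCommGroup V] [Module ℝ V] (S : Set V) : Set V :=
  { x | ∃ (n : ℕ) (c : Fin n → ℝ) (v : Fin n → V),
      (∀ i, 0 ≤ c i) ∧ (∀ i, v i ∈ S) ∧ x = ∑ i, c i • v i }

/-- A cone is the conic hull of a finite set. -/
def IsCone {V : Type*} [AddCommGroup V] [Module ℝ V] (C : Set V) : Prop :=
  ∃ S : Finset V, C = coneHull (S : Set V)

/-- The dimension of a cone: the dimension of its linear span. -/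
def coneDim {V : Type*} [AddCommGroup V] [Module ℝ V] (C : Set V) : ℕ :=
  Module.finrank ℝ (Submodule.span ℝ C)

/-- The rank of a cone: the minimum cardinality of a finite generating set. -/
def coneRank {V : Type*} [AddCommGroup V] [Module ℝ V] (C : Set V) : ℕ :=
  sInf { r : ℕ | ∃ S : Finset V, S.card = r ∧ C = coneHull (S : Set V) }

/-- A full cone: a cone whose dimension equals the ambient dimension. -/
def IsFullCone {V : Type*} [AddCommGroup V] [Module ℝ V] (C : Set V) : Prop :=
  IsCone C ∧ coneDim C = Module.finrank ℝ V

/-- A sector: a cone whose rank equals its dimension. -/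
def IsSector {V : Type*} [AddCommGroup V] [Module ℝ V] (C : Set V) : Prop :=
  IsCone C ∧ coneRank C = coneDim C

/-- A sector decomposition of a full cone `C`: a finite family of subcones, each a full
sector, whose union is `C`, with pairwise intersections of empty interior. -/
def IsSectorDecomposition {V : Type*} [AddCommGroup V] [Module ℝ V] [TopologicalSpace V]
    {p : ℕ} (C : Set V) (F : Fin p → Set V) : Prop :=
  (∀ i, F i ⊆ C) ∧ (∀ i, IsSector (F i) ∧ IsFullCone (F i)) ∧
  (C = ⋃ i, F i) ∧ ∀ i j, i ≠ j → interior (F i ∩ F j) = ∅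

/-- The intersection of two cones is a wall (of dimension `d`, one less than the ambient
dimension) if it is a cone of dimension `d`. -/
def IsWallDim {V : Type*} [AddCommGroup V] [Module ℝ V] (C C' : Set V) (d : ℕ) : Prop :=
  IsCone (C ∩ C') ∧ coneDim (C ∩ C') = d

namespace ConeAux

variable {V : Type*} [AddCommGroup V] [Module ℝ V] {S T : Set V} {x y : V}

theorem sum_mem_coneHull {ι : Type*} [Fintype ι] {c : ι → ℝ} {f : ι → V}
    (hc : ∀ i, 0 ≤ c i) (hf : ∀ i, f i ∈ S) : ∑ i, c i • f i ∈ coneHull S := by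
  classical
  let e := (Fintype.equivFin ι)
  refine ⟨Fintype.card ι, c ∘ e.symm, f ∘ e.symm, fun i => hc _, fun i => hf _, ?_⟩
  rw [← e.sum_comp]
  simp

theorem subset_coneHull : S ⊆ coneHull S := by
  intro x hx
  have := sum_mem_coneHull (ι := Fin 1) (c := fun _ => (1:ℝ)) (f := fun _ => x)
    (fun _ => zero_le_one) (fun _ => hx)
  simpa using this

theorem zero_mem_coneHull : (0 : V) ∈ coneHull S := by
  have := sum_mem_coneHull (S := S) (ι := Fin 0) (c := fun _ => (1:ℝ)) (f := fun _ => (0:V))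
    (fun i => i.elim0) (fun i => i.elim0)
  simpa using this

theorem coneHull_mono (h : S ⊆ T) : coneHull S ⊆ coneHull T := by
  rintro x ⟨N, c, v, hc, hv, rfl⟩
  exact ⟨N, c, v, hc, fun i => h (hv i), rfl⟩

theorem add_mem_coneHull (hx : x ∈ coneHull S) (hy : y ∈ coneHull S) :
    x + y ∈ coneHull S := by
  obtain ⟨N1, c1, v1, hc1, hv1, rfl⟩ := hx
  obtain ⟨N2, c2, v2, hc2, hv2, rfl⟩ := hy
  have := sum_mem_coneHull (ι := Fin N1 ⊕ Fin N2) (c := Sum.elim c1 c2)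
    (f := Sum.elim v1 v2) (by rintro (i|i) <;> [exact hc1 i; exact hc2 i])
    (by rintro (i|i) <;> [exact hv1 i; exact hv2 i])
  simpa [Fintype.sum_sum_type] using this

theorem smul_mem_coneHull {t : ℝ} (ht : 0 ≤ t) (hx : x ∈ coneHull S) :
    t • x ∈ coneHull S := by
  obtain ⟨N, c, v, hc, hv, rfl⟩ := hx
  rw [Finset.smul_sum]
  simp_rw [smul_smul]
  exact sum_mem_coneHull (fun i => mul_nonneg ht (hc i)) hv

theorem coneHull_subset_span : coneHull S ⊆ (Submodule.span ℝ S : Set V) := by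
  rintro x ⟨N, c, v, hc, hv, rfl⟩
  exact Submodule.sum_mem _ fun i _ =>
    Submodule.smul_mem _ _ (Submodule.subset_span (hv i))

theorem span_coneHull : Submodule.span ℝ (coneHull S) = Submodule.span ℝ S :=
  le_antisymm (Submodule.span_le.2 coneHull_subset_span) (Submodule.span_mono subset_coneHull)

theorem mem_coneHull_range_iff {ι : Type*} [Fintype ι] {f : ι → V} :
    x ∈ coneHull (Set.range f) ↔ ∃ c : ι → ℝ, (∀ i, 0 ≤ c i) ∧ x = ∑ i, c i • f i := by
  classical
  constructor
  · rintro ⟨N, c, v, hc, hv, rfl⟩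
    choose g hg using hv
    refine ⟨fun j => ∑ i ∈ Finset.univ.filter (fun i => g i = j), c i, fun j =>
      Finset.sum_nonneg fun i _ => hc i, ?_⟩
    rw [← Finset.sum_fiberwise_of_maps_to (g := g) (fun i _ => Finset.mem_univ (g i))
      (fun i => c i • v i)]
    refine Finset.sum_congr rfl fun j _ => ?_
    rw [Finset.sum_smul]
    refine Finset.sum_congr rfl fun i hi => ?_
    rw [Finset.mem_filter] at hi
    rw [← hg i, hi.2]
  · rintro ⟨c, hc, rfl⟩
    exact sum_mem_coneHull hc fun i => Set.mem_range_self i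

theorem image_coneHull {W : Type*} [AddCommGroup W] [Module ℝ W] (g : V →ₗ[ℝ] W) (S : Set V) :
    g '' coneHull S = coneHull (g '' S) := by
  ext y
  constructor
  · rintro ⟨x, ⟨N, c, v, hc, hv, rfl⟩, rfl⟩
    rw [map_sum]
    simp_rw [map_smul]
    exact sum_mem_coneHull hc fun i => Set.mem_image_of_mem g (hv i)
  · rintro ⟨N, c, v, hc, hv, rfl⟩
    choose w hw hw' using hv
    refine ⟨∑ i, c i • w i, sum_mem_coneHull hc hw, ?_⟩
    rw [map_sum]
    simp_rw [map_smul]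
    exact Finset.sum_congr rfl fun i _ => by rw [hw' i]

theorem sum_mem_coneHull' {α : Type*} (s : Finset α) {c : α → ℝ} {f : α → V}
    (hc : ∀ j ∈ s, 0 ≤ c j) (hf : ∀ j ∈ s, f j ∈ S) :
    ∑ j ∈ s, c j • f j ∈ coneHull S := by
  rw [← Finset.sum_coe_sort s (fun j => c j • f j)]
  exact sum_mem_coneHull (fun j => hc j j.2) (fun j => hf j j.2)

theorem mem_coneHull_union : x ∈ coneHull (S ∪ T) ↔
    ∃ u ∈ coneHull S, ∃ w ∈ coneHull T, x = u + w := by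
  classical
  constructor
  · rintro ⟨N, c, v, hc, hv, rfl⟩
    rw [← Finset.sum_filter_add_sum_filter_not Finset.univ (fun i => v i ∈ S)]
    refine ⟨_, ?_, _, ?_, rfl⟩
    · exact sum_mem_coneHull' _ (fun j _ => hc j)
        (fun j hj => (Finset.mem_filter.1 hj).2)
    · refine sum_mem_coneHull' _ (fun j _ => hc j) (fun j hj => ?_)
      have := (Finset.mem_filter.1 hj).2
      rcases hv j with h | h
      · exact absurd h this
      · exact h
  · rintro ⟨u, hu, w, hw, rfl⟩
    exact add_mem_coneHull (coneHull_mono Set.subset_union_left hu)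
      (coneHull_mono Set.subset_union_right hw)

theorem mem_coneHull_image_iff {α : Type*} {f : α → V} {s : Finset α} :
    x ∈ coneHull (f '' ↑s) ↔ ∃ c : α → ℝ, (∀ j, 0 ≤ c j) ∧ x = ∑ j ∈ s, c j • f j := by
  classical
  have himg : f '' ↑s = Set.range (fun j : {j // j ∈ s} => f j) := by
    ext y; simp [Set.mem_image]
  rw [himg, mem_coneHull_range_iff]
  constructor
  · rintro ⟨c, hc, rfl⟩
    refine ⟨fun j => if h : j ∈ s then c ⟨j, h⟩ else 0,
      fun j => by by_cases h : j ∈ s <;> simp [h, hc], ?_⟩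
    rw [← Finset.sum_coe_sort s (fun j => (if h : j ∈ s then c ⟨j, h⟩ else 0) • f j)]
    exact Finset.sum_congr rfl fun j _ => by rw [dif_pos j.2]
  · rintro ⟨c, hc, rfl⟩
    refine ⟨fun j => c j, fun j => hc j, ?_⟩
    rw [← Finset.sum_coe_sort s (fun j => c j • f j)]

def prodSubEquiv {R A B : Type*} [CommRing R] [AddCommGroup A] [AddCommGroup B]
    [Module R A] [Module R B] (p : Submodule R A) (q : Submodule R B) :
    (p.prod q) ≃ₗ[R] (p × q) where
  toFun z := (⟨z.1.1, z.2.1⟩, ⟨z.1.2, z.2.2⟩)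
  invFun z := ⟨(z.1.1, z.2.1), ⟨z.1.2, z.2.2⟩⟩
  left_inv := fun _ => rfl
  right_inv := fun _ => rfl
  map_add' := fun _ _ => rfl
  map_smul' := fun _ _ => rfl

theorem finrank_top_prod {A B : Type*} [AddCommGroup A] [AddCommGroup B]
    [Module ℝ A] [Module ℝ B] [FiniteDimensional ℝ A] [FiniteDimensional ℝ B]
    (q : Submodule ℝ B) :
    Module.finrank ℝ ((⊤ : Submodule ℝ A).prod q) = Module.finrank ℝ A + Module.finrank ℝ q := by
  rw [(prodSubEquiv ⊤ q).finrank_eq, Module.finrank_prod, finrank_top]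

theorem sum_single {k : ℕ} (a : Fin k → ℝ) :
    ∑ r, a r • (Pi.single r (1:ℝ) : Fin k → ℝ) = a := by
  ext s
  simp [Pi.single_apply]

theorem sum_eF {k n : ℕ} (a : Fin k → ℝ) :
    ∑ r, a r • ((Pi.single r 1 : Fin k → ℝ), (0 : Fin n → ℝ)) = (a, (0 : Fin n → ℝ)) := by
  ext s
  · simp only [Prod.fst_sum, Prod.smul_mk, Finset.sum_apply]
    have := congrFun (sum_single a) s
    simpa using this
  · simp [Prod.snd_sum]

theorem span_E_union {k n : ℕ} (Y : Set ((Fin k → ℝ) × (Fin n → ℝ))) :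
    Submodule.span ℝ
        ((Set.range fun a : Fin k => ((Pi.single a 1 : Fin k → ℝ), (0 : Fin n → ℝ))) ∪ Y)
      = (⊤ : Submodule ℝ (Fin k → ℝ)).prod (Submodule.span ℝ (Prod.snd '' Y)) := by
  set eF := fun a : Fin k => ((Pi.single a 1 : Fin k → ℝ), (0 : Fin n → ℝ)) with heF
  have hA : ∀ u : Fin k → ℝ,
      ((u, (0 : Fin n → ℝ)) ∈ Submodule.span ℝ (Set.range eF ∪ Y)) := by
    intro u
    rw [← sum_eF u]
    exact Submodule.sum_mem _ fun r _ => Submodule.smul_mem _ _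
      (Submodule.subset_span (Or.inl ⟨r, rfl⟩))
  refine le_antisymm (Submodule.span_le.2 ?_) ?_
  · rintro z (⟨r, rfl⟩ | hz)
    · exact ⟨trivial, Submodule.zero_mem _⟩
    · exact ⟨trivial, Submodule.subset_span ⟨z, hz, rfl⟩⟩
  · have hB : ∀ w ∈ Submodule.span ℝ (Prod.snd '' Y),
        ((0 : Fin k → ℝ), w) ∈ Submodule.span ℝ (Set.range eF ∪ Y) := by
      intro w hw
      induction hw using Submodule.span_induction with
      | mem y hy =>
        obtain ⟨z, hz, rfl⟩ := hy
        have : ((0 : Fin k → ℝ), z.2) = z - (z.1, (0 : Fin n → ℝ)) := by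
          ext <;> simp
        rw [this]
        exact Submodule.sub_mem _ (Submodule.subset_span (Or.inr hz)) (hA z.1)
      | zero => exact Submodule.zero_mem _
      | add a b _ _ ha hb => simpa using Submodule.add_mem _ ha hb
      | smul c a _ ha => simpa using Submodule.smul_mem _ c ha
    rintro ⟨u, w⟩ ⟨-, hw⟩
    have : (u, w) = (u, (0 : Fin n → ℝ)) + ((0 : Fin k → ℝ), w) := by ext <;> simp
    rw [this]
    exact Submodule.add_mem _ (hA u) (hB w hw)

theorem snd_image_coneHull {k n : ℕ} (S : Set ((Fin k → ℝ) × (Fin n → ℝ))) :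
    Prod.snd '' coneHull S = coneHull (Prod.snd '' S) := by
  simpa using image_coneHull (LinearMap.snd ℝ (Fin k → ℝ) (Fin n → ℝ)) S

theorem exists_shift {V : Type*} [AddCommGroup V] [Module ℝ V] {F : Set V}
    (hF0 : (0:V) ∈ F)
    (hFadd : ∀ x ∈ F, ∀ y ∈ F, x + y ∈ F)
    (hFsmul : ∀ t : ℝ, 0 ≤ t → ∀ x ∈ F, t • x ∈ F) :
    ∀ w ∈ Submodule.span ℝ F, ∃ f ∈ F, f + w ∈ F ∧ f - w ∈ F := by
  intro w hw
  induction hw using Submodule.span_induction with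
  | mem y hy =>
    refine ⟨y, hy, ?_, by simpa using hF0⟩
    have := hFsmul 2 (by norm_num) y hy
    rwa [two_smul] at this
  | zero => exact ⟨0, hF0, by simpa using hF0, by simpa using hF0⟩
  | add a b _ _ ha hb =>
    obtain ⟨f1, hf1, ha1, ha2⟩ := ha
    obtain ⟨f2, hf2, hb1, hb2⟩ := hb
    refine ⟨f1 + f2, hFadd _ hf1 _ hf2, ?_, ?_⟩
    · have := hFadd _ ha1 _ hb1
      convert this using 1
      abel
    · have := hFadd _ ha2 _ hb2
      convert this using 1
      abel
  | smul c a _ ha =>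
    obtain ⟨f, hf, h1, h2⟩ := ha
    rcases le_or_gt 0 c with hc | hc
    · refine ⟨c • f, hFsmul c hc _ hf, ?_, ?_⟩
      · have := hFsmul c hc _ h1
        rwa [smul_add] at this
      · have := hFsmul c hc _ h2
        rwa [smul_sub] at this
    · refine ⟨(-c) • f, hFsmul (-c) (by linarith) _ hf, ?_, ?_⟩
      · have := hFsmul (-c) (by linarith) _ h2
        rw [smul_sub] at this
        convert this using 1
        simp [neg_smul]
      · have := hFsmul (-c) (by linarith) _ h1
        rw [smul_add] at this
        convert this using 1
        simp [neg_smul]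
        abel

theorem same_side {n : ℕ} {F D1 D2 : Set (Fin n → ℝ)} (φ : (Fin n → ℝ) →ₗ[ℝ] ℝ)
    (hker : LinearMap.ker φ = Submodule.span ℝ F)
    (hF1 : F ⊆ D1) (hF2 : F ⊆ D2) (hF0 : (0 : Fin n → ℝ) ∈ F)
    (hFadd : ∀ x ∈ F, ∀ y ∈ F, x + y ∈ F)
    (hFsmul : ∀ t : ℝ, 0 ≤ t → ∀ x ∈ F, t • x ∈ F)
    (hD1add : ∀ x ∈ D1, ∀ y ∈ D1, x + y ∈ D1)
    (hD1smul : ∀ t : ℝ, 0 ≤ t → ∀ x ∈ D1, t • x ∈ D1)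
    (hD2add : ∀ x ∈ D2, ∀ y ∈ D2, x + y ∈ D2)
    (hD2smul : ∀ t : ℝ, 0 ≤ t → ∀ x ∈ D2, t • x ∈ D2)
    {d1 d2 : Fin n → ℝ} (hd1 : d1 ∈ D1) (hd2 : d2 ∈ D2)
    (h1 : 0 < φ d1) (h2 : 0 < φ d2) :
    (interior (D1 ∩ D2)).Nonempty := by
  classical
  set K1 : Set (Fin n → ℝ) := {q | ∃ f ∈ F, ∃ t : ℝ, 0 ≤ t ∧ t ≤ 1 ∧ q = f + t • d1} with hK1
  set K2 : Set (Fin n → ℝ) := {q | ∃ f ∈ F, ∃ t : ℝ, 0 ≤ t ∧ t ≤ 1 ∧ q = f + t • d2} with hK2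
  have hKsub : K1 ∩ K2 ⊆ D1 ∩ D2 := by
    rintro q ⟨⟨f, hf, t, ht0, _, rfl⟩, hq2⟩
    constructor
    · exact hD1add _ (hF1 hf) _ (hD1smul t ht0 _ hd1)
    · obtain ⟨f', hf', t', ht0', _, hq⟩ := hq2
      rw [hq]
      exact hD2add _ (hF2 hf') _ (hD2smul t' ht0' _ hd2)
  have hFconv : ∀ (s s' : ℝ), 0 ≤ s → 0 ≤ s' → ∀ x ∈ F, ∀ y ∈ F, s • x + s' • y ∈ F :=
    fun s s' hs hs' x hx y hy => hFadd _ (hFsmul s hs _ hx) _ (hFsmul s' hs' _ hy)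
  have hKconv : Convex ℝ (K1 ∩ K2) := by
    refine Convex.inter ?_ ?_
    all_goals {
      rintro q ⟨f, hf, t, ht0, ht1, rfl⟩ q' ⟨f', hf', t', ht0', ht1', rfl⟩ s s' hs hs' hss
      refine ⟨s • f + s' • f', hFconv s s' hs hs' _ hf _ hf', s * t + s' * t',
        by positivity, ?_, ?_⟩
      · nlinarith
      · simp only [smul_add, smul_smul]
        module }
  -- construct the point q off the hyperplane
  set α := φ d1 with hα
  set β := φ d2 with hβ
  set t : ℝ := min 1 (β / α) with htdef
  have ht0 : 0 < t := lt_min one_pos (div_pos h2 h1)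
  have ht1 : t ≤ 1 := min_le_left _ _
  set t' : ℝ := t * α / β with ht'def
  have ht'0 : 0 < t' := by positivity
  have ht'1 : t' ≤ 1 := by
    rw [ht'def, div_le_one h2]
    have : t ≤ β / α := min_le_right _ _
    calc t * α ≤ (β / α) * α := by nlinarith
    _ = β := by field_simp
  have hw : t • d1 - t' • d2 ∈ Submodule.span ℝ F := by
    rw [← hker, LinearMap.mem_ker, map_sub, map_smul, map_smul]
    simp only [smul_eq_mul, ← hα, ← hβ]
    rw [ht'def]
    field_simp
    ring
  obtain ⟨f, hf, hfw, -⟩ := exists_shift hF0 hFadd hFsmul _ hw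
  set q : Fin n → ℝ := f + t • d1 with hq
  have hqK : q ∈ K1 ∩ K2 := by
    constructor
    · exact ⟨f, hf, t, le_of_lt ht0, ht1, rfl⟩
    · refine ⟨f + (t • d1 - t' • d2), hfw, t', le_of_lt ht'0, ht'1, ?_⟩
      rw [hq]; abel
  have hφf : φ f = 0 := by
    have : f ∈ LinearMap.ker φ := by rw [hker]; exact Submodule.subset_span hf
    exact this
  have hφq : φ q ≠ 0 := by
    rw [hq, map_add, map_smul, hφf, smul_eq_mul, zero_add, ← hα]
    positivity
  have hFK : F ⊆ K1 ∩ K2 := by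
    intro f' hf'
    constructor
    · exact ⟨f', hf', 0, le_refl 0, zero_le_one, by simp⟩
    · exact ⟨f', hf', 0, le_refl 0, zero_le_one, by simp⟩
  have hspanK : Submodule.span ℝ (K1 ∩ K2) = ⊤ := by
    rw [eq_top_iff]
    intro v _
    have hv : v = (v - (φ v / φ q) • q) + (φ v / φ q) • q := by abel
    rw [hv]
    refine Submodule.add_mem _ ?_ (Submodule.smul_mem _ _ (Submodule.subset_span hqK))
    have hker' : v - (φ v / φ q) • q ∈ LinearMap.ker φ := by
      rw [LinearMap.mem_ker, map_sub, map_smul, smul_eq_mul, div_mul_cancel₀ _ hφq, sub_self]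
    rw [hker] at hker'
    exact Submodule.span_mono hFK hker'
  have hKne : (0 : Fin n → ℝ) ∈ K1 ∩ K2 := hFK hF0
  have haff : affineSpan ℝ (K1 ∩ K2) = ⊤ := by
    rw [AffineSubspace.affineSpan_eq_top_iff_vectorSpan_eq_top_of_nonempty ℝ (Fin n → ℝ) (Fin n → ℝ) ⟨0, hKne⟩]
    rw [eq_top_iff, ← hspanK]
    refine Submodule.span_le.2 fun v hv => ?_
    have := vsub_mem_vectorSpan ℝ hv hKne
    simpa [vsub_eq_sub] using this
  obtain ⟨z, hz⟩ := (Convex.interior_nonempty_iff_affineSpan_eq_top hKconv).2 haff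
  exact ⟨z, interior_mono hKsub hz⟩


end ConeAux


/-- In the setting of the previous lemma, assume in addition that whenever
`D_i ∩ D_ℓ` is a wall in `ℝ^n`, the index intersection `J_i ∩ J_ℓ` has `n−1` elements and
`D_i ∩ D_ℓ = coneHull({π_n(x_j) : j ∈ J_i ∩ J_ℓ})`. Then for distinct `i, ℓ`:
`C_i ∩ C_ℓ` is a wall in `ℝ^k × ℝ^n` iff `D_i ∩ D_ℓ` is a wall in `ℝ^n`, in which case
`C_i ∩ C_ℓ = coneHull({e_1,…,e_k} ∪ {x_j : j ∈ J_i ∩ J_ℓ})`; and `W ↦ π_n(W)` is a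
one-to-one correspondence between the walls of `{C_i}` and the walls of `{D_i}`. -/
theorem stmt_4 (k n m p : ℕ) (hk : 0 < k) (hn : 0 < n) (hm : 0 < m) (hp : 0 < p)
    (hmn : n ≤ m)
    (C : Set ((Fin k → ℝ) × (Fin n → ℝ)))
    (hcone : IsCone C)
    (hsub : C ⊆ {q : (Fin k → ℝ) × (Fin n → ℝ) | ∀ i, 0 ≤ q.1 i})
    (he : ∀ i : Fin k, ((Pi.single i 1 : Fin k → ℝ), (0 : Fin n → ℝ)) ∈ C)
    (hproj : Prod.snd '' C = Set.univ)
    (x : Fin m → (Fin k → ℝ) × (Fin n → ℝ)) (hx : ∀ j, x j ∈ C)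
    (J : Fin p → Finset (Fin m)) (hJ : ∀ i, (J i).card = n)
    (Cfam : Fin p → Set ((Fin k → ℝ) × (Fin n → ℝ)))
    (hCfam : ∀ i, Cfam i = coneHull
      ((Set.range fun a : Fin k => ((Pi.single a 1 : Fin k → ℝ), (0 : Fin n → ℝ)))
        ∪ (x '' ↑(J i))))
    (Dfam : Fin p → Set (Fin n → ℝ))
    (hDfam : ∀ i, Dfam i = coneHull ((fun j => (x j).2) '' ↑(J i)))
    (hCunion : C = ⋃ i, Cfam i)
    (hDdecomp : IsSectorDecomposition Set.univ Dfam)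
    (hwalls : ∀ i l, i ≠ l → IsWallDim (Dfam i) (Dfam l) (n - 1) →
      (J i ∩ J l).card = n - 1 ∧
      Dfam i ∩ Dfam l = coneHull ((fun j => (x j).2) '' ↑(J i ∩ J l))) :
    (∀ i l, i ≠ l →
      (IsWallDim (Cfam i) (Cfam l) (k + n - 1) ↔ IsWallDim (Dfam i) (Dfam l) (n - 1)) ∧
      (IsWallDim (Dfam i) (Dfam l) (n - 1) →
        Cfam i ∩ Cfam l = coneHull
          ((Set.range fun a : Fin k => ((Pi.single a 1 : Fin k → ℝ), (0 : Fin n → ℝ)))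
            ∪ (x '' ↑(J i ∩ J l))))) ∧
    Set.BijOn (fun W => Prod.snd '' W)
      {W | ∃ i l, i ≠ l ∧ W = Cfam i ∩ Cfam l ∧ IsWallDim (Cfam i) (Cfam l) (k + n - 1)}
      {W' | ∃ i l, i ≠ l ∧ W' = Dfam i ∩ Dfam l ∧ IsWallDim (Dfam i) (Dfam l) (n - 1)} := by
  classical
  obtain ⟨hDsub', hDfull, hDcover, hDint⟩ := hDdecomp
  set eF : Fin k → (Fin k → ℝ) × (Fin n → ℝ) :=
    fun a : Fin k => ((Pi.single a 1 : Fin k → ℝ), (0 : Fin n → ℝ)) with heF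
  have hx1 : ∀ j r, 0 ≤ (x j).1 r := fun j r => hsub (hx j) r
  have hDmem : ∀ (i) (v), v ∈ Dfam i ↔
      ∃ c : Fin m → ℝ, (∀ j, 0 ≤ c j) ∧ v = ∑ j ∈ J i, c j • (x j).2 := by
    intro i v; rw [hDfam i]; exact ConeAux.mem_coneHull_image_iff
  have hE : ∀ z : (Fin k → ℝ) × (Fin n → ℝ), z ∈ coneHull (Set.range eF) ↔
      ∃ a : Fin k → ℝ, (∀ r, 0 ≤ a r) ∧ z = (a, 0) := by
    intro z
    rw [ConeAux.mem_coneHull_range_iff]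
    constructor
    · rintro ⟨c, hc, rfl⟩; exact ⟨c, hc, ConeAux.sum_eF c⟩
    · rintro ⟨a, ha, rfl⟩; exact ⟨a, ha, (ConeAux.sum_eF a).symm⟩
  have hCmem : ∀ (i) (z), z ∈ Cfam i ↔
      ∃ (a : Fin k → ℝ) (c : Fin m → ℝ), (∀ r, 0 ≤ a r) ∧ (∀ j, 0 ≤ c j) ∧
        z = ((a, 0) : (Fin k → ℝ) × (Fin n → ℝ)) + ∑ j ∈ J i, c j • x j := by
    intro i z
    rw [hCfam i, ConeAux.mem_coneHull_union]
    constructor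
    · rintro ⟨u, hu, w, hw, rfl⟩
      obtain ⟨a, ha, rfl⟩ := (hE u).1 hu
      obtain ⟨c, hc, rfl⟩ := ConeAux.mem_coneHull_image_iff.1 hw
      exact ⟨a, c, ha, hc, rfl⟩
    · rintro ⟨a, c, ha, hc, rfl⟩
      exact ⟨(a, 0), (hE _).2 ⟨a, ha, rfl⟩, _,
        ConeAux.mem_coneHull_image_iff.2 ⟨c, hc, rfl⟩, rfl⟩
  have hsnd : ∀ (i) (z), z ∈ Cfam i → z.2 ∈ Dfam i := by
    intro i z hz
    obtain ⟨a, c, ha, hc, rfl⟩ := (hCmem i z).1 hz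
    refine (hDmem i _).2 ⟨c, hc, ?_⟩
    simp [Prod.snd_sum]
  have hproj2 : ∀ i l, Prod.snd '' (Cfam i ∩ Cfam l) = Dfam i ∩ Dfam l := by
    intro i l
    apply Set.Subset.antisymm
    · rintro v ⟨z, ⟨hzi, hzl⟩, rfl⟩
      exact ⟨hsnd i z hzi, hsnd l z hzl⟩
    · rintro v ⟨hvi, hvl⟩
      obtain ⟨c, hc, rfl⟩ := (hDmem i v).1 hvi
      obtain ⟨d, hd, hveq⟩ := (hDmem l _).1 hvl
      refine ⟨((∑ j ∈ J l, d j • (x j).1) + ∑ j ∈ J i, c j • (x j).1,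
        ∑ j ∈ J i, c j • (x j).2), ⟨?_, ?_⟩, rfl⟩
      · refine (hCmem i _).2 ⟨∑ j ∈ J l, d j • (x j).1, c, ?_, hc, ?_⟩
        · intro r
          rw [Finset.sum_apply]
          exact Finset.sum_nonneg fun j _ => by
            have h1 := hx1 j r; have h2 := hd j
            simpa using mul_nonneg h2 h1
        · ext s
          · simp [Prod.fst_sum]
          · simp [Prod.snd_sum]
      · refine (hCmem l _).2 ⟨∑ j ∈ J i, c j • (x j).1, d, ?_, hd, ?_⟩
        · intro r
          rw [Finset.sum_apply]
          exact Finset.sum_nonneg fun j _ => by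
            have h1 := hx1 j r; have h2 := hc j
            simpa using mul_nonneg h2 h1
        · have hveq2 : ∑ j ∈ J i, c j • (x j).2 = ∑ j ∈ J l, d j • (x j).2 := hveq
          ext s
          · simp [Prod.fst_sum, add_comm]
          · simp only [Prod.snd_add, Prod.snd_sum]
            rw [hveq2]
            simp [Prod.snd_sum]
  have hEsubC : ∀ i, Set.range eF ⊆ Cfam i := by
    intro i; rw [hCfam i]
    exact Set.subset_union_left.trans ConeAux.subset_coneHull
  have hspanCD : ∀ i l, Submodule.span ℝ (Cfam i ∩ Cfam l)
      = (⊤ : Submodule ℝ (Fin k → ℝ)).prod (Submodule.span ℝ (Dfam i ∩ Dfam l)) := by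
    intro i l
    have hsubE : Set.range eF ⊆ Cfam i ∩ Cfam l := Set.subset_inter (hEsubC i) (hEsubC l)
    have hun : Set.range eF ∪ (Cfam i ∩ Cfam l) = Cfam i ∩ Cfam l :=
      Set.union_eq_self_of_subset_left hsubE
    rw [← hun, ConeAux.span_E_union, hproj2 i l]
  have hfinrank : ∀ i l, coneDim (Cfam i ∩ Cfam l) = k + coneDim (Dfam i ∩ Dfam l) := by
    intro i l
    show Module.finrank ℝ (Submodule.span ℝ (Cfam i ∩ Cfam l)) = _
    rw [hspanCD i l, ConeAux.finrank_top_prod, Module.finrank_fin_fun]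
    rfl
  have hDdim : ∀ i, Module.finrank ℝ (Submodule.span ℝ (Dfam i)) = n := by
    intro i
    have h1 : coneDim (Dfam i) = Module.finrank ℝ (Fin n → ℝ) := (hDfull i).2.2
    rw [Module.finrank_fin_fun] at h1
    exact h1
  have hLI : ∀ i, LinearIndependent ℝ (fun j : {j // j ∈ J i} => (x j.1).2) := by
    intro i
    rw [linearIndependent_iff_card_eq_finrank_span]
    have hrange : Set.range (fun j : {j // j ∈ J i} => (x j.1).2)
        = (fun j => (x j).2) '' ↑(J i) := by ext v; simp
    have hcard : Fintype.card {j // j ∈ J i} = n := by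
      rw [Fintype.card_coe, hJ i]
    rw [hcard]
    show n = Module.finrank ℝ (Submodule.span ℝ (Set.range _))
    rw [hrange, ← ConeAux.span_coneHull, ← hDfam i, hDdim i]
  have huniq : ∀ (i : Fin p) (c d : Fin m → ℝ),
      (∑ j ∈ J i, c j • (x j).2 = ∑ j ∈ J i, d j • (x j).2) → ∀ j ∈ J i, c j = d j := by
    intro i c d h j hj
    have h2 : ∑ j : {j // j ∈ J i}, (c j.1 - d j.1) • (x j.1).2 = 0 := by
      simp_rw [sub_smul]
      rw [Finset.sum_sub_distrib]
      rw [Finset.sum_coe_sort (J i) (fun j => c j • (x j).2),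
        Finset.sum_coe_sort (J i) (fun j => d j • (x j).2), h, sub_self]
    have h3 := Fintype.linearIndependent_iff.1 (hLI i) _ h2 ⟨j, hj⟩
    have : c j - d j = 0 := h3
    linarith
  have hwallEq : ∀ i l, i ≠ l → IsWallDim (Dfam i) (Dfam l) (n - 1) →
      Cfam i ∩ Cfam l = coneHull (Set.range eF ∪ x '' ↑(J i ∩ J l)) := by
    intro i l hil hwall
    obtain ⟨hcard, hDeq⟩ := hwalls i l hil hwall
    have hfilter : J i ∩ J l = (J i).filter (fun j => j ∈ J l) := by
      ext j; simp [Finset.mem_filter, Finset.mem_inter]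
    apply Set.Subset.antisymm
    · rintro z ⟨hzi, hzl⟩
      obtain ⟨a, c, ha, hc, rfl⟩ := (hCmem i _).1 hzi
      have hv2 : (((a, 0) : (Fin k → ℝ) × (Fin n → ℝ)) + ∑ j ∈ J i, c j • x j).2
          = ∑ j ∈ J i, c j • (x j).2 := by simp [Prod.snd_sum]
      have hvD : ∑ j ∈ J i, c j • (x j).2 ∈ Dfam i ∩ Dfam l := by
        rw [← hv2]; exact ⟨hsnd i _ hzi, hsnd l _ hzl⟩
      rw [hDeq] at hvD
      obtain ⟨e, he, heq⟩ := ConeAux.mem_coneHull_image_iff.1 hvD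
      have heq2 : ∑ j ∈ J i, c j • (x j).2
          = ∑ j ∈ J i, (if j ∈ J l then e j else 0) • (x j).2 := by
        rw [heq, hfilter, Finset.sum_filter]
        exact Finset.sum_congr rfl fun j _ => by split <;> simp
      have hc0 : ∀ j ∈ J i, c j = (if j ∈ J l then e j else 0) := huniq i _ _ heq2
      have hsum2 : ∑ j ∈ J i, c j • x j = ∑ j ∈ J i ∩ J l, c j • x j := by
        rw [hfilter, Finset.sum_filter]
        refine Finset.sum_congr rfl fun j hj => ?_
        by_cases hjl : j ∈ J l
        · simp [hjl]
        · have hc1 := hc0 j hj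
          rw [if_neg hjl] at hc1
          simp [hjl, hc1]
      rw [hsum2]
      exact ConeAux.mem_coneHull_union.2 ⟨(a, 0), (hE _).2 ⟨a, ha, rfl⟩, _,
        ConeAux.mem_coneHull_image_iff.2 ⟨c, hc, rfl⟩, rfl⟩
    · have hsub1 : coneHull (Set.range eF ∪ x '' ↑(J i ∩ J l)) ⊆ Cfam i := by
        rw [hCfam i]
        exact ConeAux.coneHull_mono (Set.union_subset_union_right _
          (Set.image_mono (by exact_mod_cast (Finset.inter_subset_left : J i ∩ J l ⊆ J i))))
      have hsub2 : coneHull (Set.range eF ∪ x '' ↑(J i ∩ J l)) ⊆ Cfam l := by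
        rw [hCfam l]
        exact ConeAux.coneHull_mono (Set.union_subset_union_right _
          (Set.image_mono (by exact_mod_cast (Finset.inter_subset_right : J i ∩ J l ⊆ J l))))
      exact Set.subset_inter hsub1 hsub2
  have hdimWall : ∀ i l, i ≠ l → IsWallDim (Dfam i) (Dfam l) (n - 1) →
      coneDim (coneHull (Set.range eF ∪ x '' ↑(J i ∩ J l))) = k + n - 1 := by
    intro i l hil hwall
    obtain ⟨-, hDeq⟩ := hwalls i l hil hwall
    show Module.finrank ℝ (Submodule.span ℝ _) = _
    rw [ConeAux.span_coneHull, ConeAux.span_E_union, Set.image_image,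
      ← ConeAux.span_coneHull (S := (fun j => (x j).2) '' ↑(J i ∩ J l)), ← hDeq,
      ConeAux.finrank_top_prod, Module.finrank_fin_fun]
    have hd : Module.finrank ℝ (Submodule.span ℝ (Dfam i ∩ Dfam l)) = n - 1 := hwall.2
    rw [hd]
    omega
  have hiff : ∀ i l, i ≠ l →
      (IsWallDim (Cfam i) (Cfam l) (k + n - 1) ↔ IsWallDim (Dfam i) (Dfam l) (n - 1)) := by
    intro i l hil
    constructor
    · rintro ⟨⟨T, hT⟩, hdim⟩
      constructor
      · refine ⟨T.image Prod.snd, ?_⟩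
        rw [← hproj2 i l, hT, Finset.coe_image, ConeAux.snd_image_coneHull]
      · have h4 := hfinrank i l
        rw [hdim] at h4
        omega
    · intro hwall
      refine ⟨?_, ?_⟩
      · refine ⟨Finset.image eF Finset.univ ∪ Finset.image x (J i ∩ J l), ?_⟩
        rw [hwallEq i l hil hwall]
        congr 1
        simp only [Finset.coe_union, Finset.coe_image, Finset.coe_univ, Set.image_univ]
      · rw [hwallEq i l hil hwall]
        exact hdimWall i l hil hwall
  have hDadd : ∀ i, ∀ a ∈ Dfam i, ∀ b ∈ Dfam i, a + b ∈ Dfam i := by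
    intro i a ha b hb
    rw [hDfam i] at ha hb ⊢
    exact ConeAux.add_mem_coneHull ha hb
  have hDsmul : ∀ (i) (t : ℝ), 0 ≤ t → ∀ a ∈ Dfam i, t • a ∈ Dfam i := by
    intro i t ht a ha
    rw [hDfam i] at ha ⊢
    exact ConeAux.smul_mem_coneHull ht ha
  have hD0 : ∀ i, (0 : Fin n → ℝ) ∈ Dfam i := by
    intro i; rw [hDfam i]; exact ConeAux.zero_mem_coneHull
  have hDtop : ∀ i, Submodule.span ℝ (Dfam i) = ⊤ := by
    intro i
    apply Submodule.eq_top_of_finrank_eq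
    rw [hDdim i, Module.finrank_fin_fun]
  have hφpt : ∀ (φ : (Fin n → ℝ) →ₗ[ℝ] ℝ), φ ≠ 0 → ∀ i, ∃ d ∈ Dfam i, φ d ≠ 0 := by
    intro φ hφ i
    by_contra h
    push_neg at h
    apply hφ
    have hsub2 : Dfam i ⊆ (LinearMap.ker φ : Set (Fin n → ℝ)) := fun d hd => h d hd
    have hle := Submodule.span_le.2 hsub2
    rw [hDtop i] at hle
    apply LinearMap.ext
    intro v
    simpa using hle (Submodule.mem_top : v ∈ (⊤ : Submodule ℝ (Fin n → ℝ)))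
  have noThree : ∀ a b c : Fin p, a ≠ b → c ≠ a → c ≠ b →
      coneDim (Dfam a ∩ Dfam b) = n - 1 → ¬(Dfam a ∩ Dfam b ⊆ Dfam c) := by
    intro a b c hab hca hcb hdim hsub3
    set F := Dfam a ∩ Dfam b with hFdef
    have hFa : F ⊆ Dfam a := Set.inter_subset_left
    have hFb : F ⊆ Dfam b := Set.inter_subset_right
    have hF0 : (0 : Fin n → ℝ) ∈ F := ⟨hD0 a, hD0 b⟩
    have hFadd : ∀ u ∈ F, ∀ v ∈ F, u + v ∈ F := fun u hu v hv =>
      ⟨hDadd a _ hu.1 _ hv.1, hDadd b _ hu.2 _ hv.2⟩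
    have hFsmul : ∀ t : ℝ, 0 ≤ t → ∀ u ∈ F, t • u ∈ F := fun t ht u hu =>
      ⟨hDsmul a t ht _ hu.1, hDsmul b t ht _ hu.2⟩
    have hdim' : Module.finrank ℝ (Submodule.span ℝ F) = n - 1 := hdim
    have hHproper : Submodule.span ℝ F < ⊤ := by
      rw [lt_top_iff_ne_top]
      intro hcontr
      have hcc : Module.finrank ℝ (Submodule.span ℝ F) = n := by
        rw [hcontr, finrank_top, Module.finrank_fin_fun]
      omega
    obtain ⟨φ, hφ0, hφmap⟩ := Submodule.exists_dual_map_eq_bot_of_lt_top hHproper inferInstance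
    have hφker : Submodule.span ℝ F ≤ LinearMap.ker φ := by
      intro v hv
      rw [LinearMap.mem_ker]
      have : φ v ∈ Submodule.map φ (Submodule.span ℝ F) := ⟨v, hv, rfl⟩
      rw [hφmap] at this
      simpa using this
    have hrange : LinearMap.range φ = ⊤ := by
      obtain ⟨v, hv⟩ : ∃ v, φ v ≠ 0 := by
        by_contra h
        push_neg at h
        exact hφ0 (LinearMap.ext fun v => h v)
      rw [eq_top_iff]
      rintro r -
      exact ⟨(r / φ v) • v, by rw [map_smul, smul_eq_mul, div_mul_cancel₀ _ hv]⟩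
    have hkerdim : Module.finrank ℝ (LinearMap.ker φ) = n - 1 := by
      have h5 := LinearMap.finrank_range_add_finrank_ker φ
      rw [hrange, finrank_top, Module.finrank_fin_fun, Module.finrank_self] at h5
      omega
    have hker : LinearMap.ker φ = Submodule.span ℝ F := by
      symm
      exact Submodule.eq_of_le_of_finrank_le hφker (by rw [hkerdim, hdim'])
    have hkerneg : LinearMap.ker (-φ) = Submodule.span ℝ F := by
      rw [← hker]
      ext v
      simp [neg_eq_zero]
    obtain ⟨da, hda, hda0⟩ := hφpt φ hφ0 a
    obtain ⟨db, hdb, hdb0⟩ := hφpt φ hφ0 b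
    obtain ⟨dc, hdc, hdc0⟩ := hφpt φ hφ0 c
    have fin : ∀ (u v : Fin p) (ψ : (Fin n → ℝ) →ₗ[ℝ] ℝ), u ≠ v →
        LinearMap.ker ψ = Submodule.span ℝ F → F ⊆ Dfam u → F ⊆ Dfam v →
        ∀ du ∈ Dfam u, ∀ dv ∈ Dfam v, 0 < ψ du → 0 < ψ dv → False := by
      intro u v ψ huv hkψ hFu hFv du hdu dv hdv h1 h2
      have hne := ConeAux.same_side ψ hkψ hFu hFv hF0 hFadd hFsmul (hDadd u) (hDsmul u)
        (hDadd v) (hDsmul v) hdu hdv h1 h2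
      rw [hDint u v huv] at hne
      exact Set.not_nonempty_empty hne
    rcases hda0.lt_or_gt with hA | hA <;> rcases hdb0.lt_or_gt with hB | hB <;>
      rcases hdc0.lt_or_gt with hC | hC
    · exact fin a b (-φ) hab hkerneg hFa hFb da hda db hdb (by simpa) (by simpa)
    · exact fin a b (-φ) hab hkerneg hFa hFb da hda db hdb (by simpa) (by simpa)
    · exact fin a c (-φ) hca.symm hkerneg hFa hsub3 da hda dc hdc (by simpa) (by simpa)
    · exact fin b c φ hcb.symm hker hFb hsub3 db hdb dc hdc hB hC
    · exact fin b c (-φ) hcb.symm hkerneg hFb hsub3 db hdb dc hdc (by simpa) (by simpa)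
    · exact fin a c φ hca.symm hker hFa hsub3 da hda dc hdc hA hC
    · exact fin a b φ hab hker hFa hFb da hda db hdb hA hB
    · exact fin a b φ hab hker hFa hFb da hda db hdb hA hB
  have hpair : ∀ a b a' b' : Fin p, a ≠ b → a' ≠ b' →
      Dfam a ∩ Dfam b = Dfam a' ∩ Dfam b' → coneDim (Dfam a ∩ Dfam b) = n - 1 →
      Cfam a ∩ Cfam b = Cfam a' ∩ Cfam b' := by
    intro a b a' b' hab ha'b' hDeq hdim
    have hsubs1 : Dfam a ∩ Dfam b ⊆ Dfam a' := by rw [hDeq]; exact Set.inter_subset_left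
    have hsubs2 : Dfam a ∩ Dfam b ⊆ Dfam b' := by rw [hDeq]; exact Set.inter_subset_right
    by_cases h1 : a' = a
    · by_cases h2 : b' = b
      · rw [h1, h2]
      · have hb'a : b' ≠ a := fun hh => ha'b' (by rw [h1, hh])
        exact absurd hsubs2 (noThree a b b' hab hb'a h2 hdim)
    · by_cases h2 : a' = b
      · by_cases h3 : b' = a
        · rw [h2, h3, Set.inter_comm]
        · have hb'b : b' ≠ b := fun hh => ha'b' (h2.trans hh.symm)
          exact absurd hsubs2 (noThree a b b' hab h3 hb'b hdim)
      · exact absurd hsubs1 (noThree a b a' hab h1 h2 hdim)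
  refine ⟨fun i l hil => ⟨hiff i l hil, fun hwall => hwallEq i l hil hwall⟩, ?_, ?_, ?_⟩
  · rintro W ⟨i, l, hil, rfl, hW⟩
    exact ⟨i, l, hil, hproj2 i l, (hiff i l hil).1 hW⟩
  · rintro W ⟨i, l, hil, rfl, hW⟩ W' ⟨i', l', hil', rfl, hW'⟩ himg
    simp only at himg
    rw [hproj2 i l, hproj2 i' l'] at himg
    exact hpair i l i' l' hil hil' himg ((hiff i l hil).1 hW).2
  · rintro W' ⟨i, l, hil, rfl, hW'⟩
    exact ⟨Cfam i ∩ Cfam l, ⟨i, l, hil, rfl, (hiff i l hil).2 hW'⟩, hproj2 i l⟩
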